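/- Let L ≤ N ≤ M be left R-modules. If N is PSD in M, then L is PSD in M. -/

import Mathlib

open Submodule Function

/-- A submodule `N` of `M` is PSD in `M` if whenever `N + X = M`, there is a
projective direct summand `S` of `M` with `S ≤ N` and `M = S ⊕ X`. -/
def IsPSD (R : Type*) [Ring R] {M : Type*} [AddCommGroup M] [Module R M]
    (N : Submodule R M) : Prop :=
  ∀ X : Submodule R M, N ⊔ X = ⊤ →
    ∃ S : Submodule R M, S ≤ N ∧ Module.Projective R ↥S ∧ IsCompl S X

/-- `N` is small in `M`: `N + L = M` implies `L = M`. -/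
def IsSmallSub (R : Type*) [Ring R] {M : Type*} [AddCommGroup M] [Module R M]
    (N : Submodule R M) : Prop :=
  ∀ L : Submodule R M, N ⊔ L = ⊤ → L = ⊤

/-- The (Jacobson) radical of a module: intersection of all maximal submodules. -/
def radM (R M : Type*) [Ring R] [AddCommGroup M] [Module R M] : Submodule R M :=
  sInf {m : Submodule R M | IsCoatom m}

/-- `M` is supplemented: every submodule `X` has a submodule `Y` with `X + Y = M`
and `X ∩ Y` small in `Y`. -/
def IsSupplemented (R M : Type*) [Ring R] [AddCommGroup M] [Module R M] : Prop :=
  ∀ X : Submodule R M, ∃ Y : Submodule R M, X ⊔ Y = ⊤ ∧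
    IsSmallSub R (Submodule.comap Y.subtype X)

/-- `M` is lifting: every submodule `N` admits a decomposition `M = A ⊕ B` with
`A ≤ N` and `N ∩ B` small in `B`. -/
def IsLifting (R M : Type*) [Ring R] [AddCommGroup M] [Module R M] : Prop :=
  ∀ N : Submodule R M, ∃ A B : Submodule R M, IsCompl A B ∧ A ≤ N ∧
    IsSmallSub R (Submodule.comap B.subtype N)

/-- `Y` is an `I`-supplement of `X` in `M`: `X + Y = M`, `X ∩ Y ⊆ IY`, and
`X ∩ Y` is PSD in `Y`. -/
def IsISupplementOf {R : Type*} [Ring R] {M : Type*} [AddCommGroup M] [Module R M]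
    (I : Ideal R) (Y X : Submodule R M) : Prop :=
  X ⊔ Y = ⊤ ∧ X ⊓ Y ≤ I • Y ∧ IsPSD R (Submodule.comap Y.subtype X)

/-- `M` is `I`-supplemented: every submodule has an `I`-supplement in `M`. -/
def IsISupplemented {R : Type*} [Ring R] (I : Ideal R) (M : Type*)
    [AddCommGroup M] [Module R M] : Prop :=
  ∀ X : Submodule R M, ∃ Y : Submodule R M, IsISupplementOf I Y X

theorem stmt2 {R M : Type*} [Ring R] [AddCommGroup M] [Module R M]
    (L N : Submodule R M) (hLN : L ≤ N) (h : IsPSD R N) : IsPSD R L := by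
  intro X hX
  obtain ⟨S, hSN, hSproj, hScompl⟩ := h X (by rw [eq_top_iff, ← hX]; exact sup_le_sup hLN le_rfl)
  set π := S.linearProjOfIsCompl X hScompl with hπ
  have hsurj : Surjective (π.comp L.subtype) := by
    intro s
    have hs : (s : M) ∈ L ⊔ X := hX ▸ mem_top
    obtain ⟨l, hl, x, hx, hlx⟩ := Submodule.mem_sup.mp hs
    refine ⟨⟨l, hl⟩, ?_⟩
    have h1 : π (s : M) = s := Submodule.linearProjOfIsCompl_apply_left hScompl s
    have hx0 : π x = 0 := Submodule.linearProjOfIsCompl_apply_right' hScompl hx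
    simp only [LinearMap.comp_apply, Submodule.subtype_apply]
    rw [← h1, ← hlx]
    simp [map_add, hx0]
  haveI := hSproj
  obtain ⟨i, hi⟩ := Module.projective_lifting_property (π.comp L.subtype) LinearMap.id hsurj
  set j := L.subtype.comp i with hj
  have hπj : ∀ s : S, π (j s) = s := by
    intro s
    have := congrArg (fun f => f s) hi
    simpa [j, LinearMap.comp_apply] using this
  have hjinj : Injective j := by
    intro a b hab
    have ha := hπj a
    rw [hab, hπj b] at ha
    exact ha.symm
  refine ⟨LinearMap.range j, ?_, ?_, ?_, ?_⟩
  · rintro _ ⟨s, rfl⟩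
    exact (i s).2
  · exact Module.Projective.of_equiv (LinearEquiv.ofInjective j hjinj)
  · rw [disjoint_iff]
    ext m
    simp only [Submodule.mem_inf, Submodule.mem_bot, LinearMap.mem_range]
    constructor
    · rintro ⟨⟨s, rfl⟩, hmX⟩
      have h0 : π (j s) = 0 := Submodule.linearProjOfIsCompl_apply_right' hScompl hmX
      rw [hπj s] at h0
      rw [h0]; simp [j]
    · rintro rfl
      exact ⟨⟨0, by simp [j]⟩, X.zero_mem⟩
  · rw [codisjoint_iff, eq_top_iff]
    intro m _
    refine Submodule.mem_sup.mpr ⟨j (π m), ⟨π m, rfl⟩, m - j (π m), ?_, by abel⟩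
    rw [← Submodule.linearProjOfIsCompl_ker (q := X) hScompl, LinearMap.mem_ker]
    change π (m - j (π m)) = 0
    rw [map_sub, hπj, sub_self]
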